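/- Fix n ∈ ℕ and let W be a random variable taking values in ℕ = {1,2,...} with probability generating function ρ(s) = E[s^W]. Consider the binomial allocation model: a random row X ∈ {0,1}^n is formed by, independently of W, throwing W balls independently and uniformly at random into the n coordinates and setting X_j = 1 if and only if coordinate j receives an odd number of balls. Let X_1, ..., X_m be m i.i.d. copies of X and let A(n,m) be the event that X_1 + ⋯ + X_m ≡ 0 (mod 2) componentwise. Then P[A(n,m)] = 2^{−n} ∑_{j=0}^n C(n,j) (ρ(1 − 2j/n))^m. -/

import Mathlib

open Filter Topology

/-- The probability generating function `ρ(s) = E[s^W]` of an `ℕ`-valued random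
variable `W` with probability mass function `p`. -/
noncomputable def rho (p : ℕ → ℝ) (s : ℝ) : ℝ := ∑' k, p k * s ^ k

open Classical in
/-- The law of a row in the binomial allocation model: the probability that the
row equals `x ∈ {0,1}^n`, where the row is obtained by throwing `W` balls
(`W` having pmf `p`) independently and uniformly into the `n` coordinates and
recording the parity of each occupancy count. -/
noncomputable def binRow (p : ℕ → ℝ) (n : ℕ) (x : Fin n → ZMod 2) : ℝ :=
  ∑' k, p k *
    ((Finset.univ.filter (fun f : Fin k → Fin n =>
        ∀ j, (x j = 1 ↔ Odd ((Finset.univ.filter (fun i => f i = j)).card)))).card : ℝ) /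
      (n : ℝ) ^ k

/-- `P[A(n,m)]`: the probability that every column sum of the `m × n` matrix
with i.i.d. rows distributed as `binRow p n` is even. -/
noncomputable def probAbin (p : ℕ → ℝ) (n m : ℕ) : ℝ :=
  ∑ M : Fin m → Fin n → ZMod 2,
    if ∀ j, (∑ i, M i j) = 0 then ∏ i, binRow p n (M i) else 0



noncomputable def chi (a : ZMod 2) : ℝ := if a = 0 then 1 else -1

lemma chi_add (a b : ZMod 2) : chi (a + b) = chi a * chi b := by
  rcases (by decide : ∀ x : ZMod 2, x = 0 ∨ x = 1) a with rfl | rfl <;> rcases (by decide : ∀ x : ZMod 2, x = 0 ∨ x = 1) b with rfl | rfl <;> simp only [chi, add_zero, zero_add, show ((1:ZMod 2)+(1:ZMod 2)) = 0 by decide, show (1:ZMod 2) ≠ 0 by decide, if_true, if_false, eq_self_iff_true] <;> norm_num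

lemma chi_zero : chi 0 = 1 := by norm_num [chi]

lemma chi_sum {ι : Type*} (s : Finset ι) (h : ι → ZMod 2) :
    chi (∑ i ∈ s, h i) = ∏ i ∈ s, chi (h i) := by
  induction s using Finset.cons_induction with
  | empty => simp [chi]
  | cons a s ha ih => rw [Finset.sum_cons, Finset.prod_cons, chi_add, ih]

lemma zmod_parity (a : ZMod 2) (c : ℕ) : (a = 1 ↔ Odd c) ↔ a = (c : ℕ) := by
  rw [← ZMod.natCast_mod c 2, Nat.odd_iff]
  rcases Nat.mod_two_eq_zero_or_one c with h | h <;> rw [h] <;> revert a <;> decide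

lemma zmod_sum_chi (g : ZMod 2 → ℝ) : ∑ a : ZMod 2, g a = g 0 + g 1 := by
  have huniv : (Finset.univ : Finset (ZMod 2)) = {0, 1} := by decide
  rw [huniv, Finset.sum_insert (by decide), Finset.sum_singleton]

/-- parity vector of a ball-throw -/
noncomputable def pv {k n : ℕ} (f : Fin k → Fin n) : Fin n → ZMod 2 :=
  fun j => ((Finset.univ.filter (fun i => f i = j)).card : ZMod 2)

lemma dot_pv {k n : ℕ} (t : Fin n → ZMod 2) (f : Fin k → Fin n) :
    ∑ j, t j * pv f j = ∑ i, t (f i) := by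
  unfold pv
  have h1 : ∀ j : Fin n, ((Finset.univ.filter (fun i => f i = j)).card : ZMod 2)
      = ∑ i : Fin k, if f i = j then 1 else 0 := by
    intro j
    rw [Finset.card_filter]
    push_cast
    rfl
  simp only [h1, Finset.mul_sum]
  rw [Finset.sum_comm]
  congr 1; funext i
  simp only [mul_ite, mul_one, mul_zero]
  calc (∑ j : Fin n, if f i = j then t j else 0) = if f i ∈ Finset.univ then t (f i) else 0 :=
        Finset.sum_ite_eq Finset.univ (f i) t
    _ = t (f i) := by simp

open Classical in
lemma charsum_k (n k : ℕ) (t : Fin n → ZMod 2) :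
    ∑ x : Fin n → ZMod 2,
      ((Finset.univ.filter (fun f : Fin k → Fin n =>
        ∀ j, (x j = 1 ↔ Odd ((Finset.univ.filter (fun i => f i = j)).card)))).card : ℝ)
        * chi (∑ j, t j * x j)
      = (∑ c : Fin n, chi (t c)) ^ k := by
  rw [Fintype.sum_pow]
  have h2 : ∀ f : Fin k → Fin n, ∏ i, chi (t (f i)) = chi (∑ j, t j * pv f j) := by
    intro f
    rw [dot_pv, chi_sum]
  simp only [h2]
  rw [← Finset.sum_fiberwise Finset.univ (fun f : Fin k → Fin n => pv f)
        (fun f => chi (∑ j, t j * pv f j))]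
  congr 1; funext x
  have h3 : Finset.univ.filter (fun f : Fin k → Fin n => pv f = x)
      = Finset.univ.filter (fun f : Fin k → Fin n =>
        ∀ j, (x j = 1 ↔ Odd ((Finset.univ.filter (fun i => f i = j)).card))) := by
    apply Finset.filter_congr
    intro f _
    simp only [zmod_parity]
    constructor
    · intro h j; exact (congrFun h j).symm
    · intro h; funext j; exact (h j).symm
  have h4 : ∑ f ∈ Finset.univ.filter (fun f : Fin k → Fin n => pv f = x),
      chi (∑ j, t j * pv f j)
      = ((Finset.univ.filter (fun f : Fin k → Fin n => pv f = x)).card : ℝ)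
        * chi (∑ j, t j * x j) := by
    rw [Finset.sum_congr rfl (fun f hf => by
      rw [show pv f = x from (Finset.mem_filter.mp hf).2]), Finset.sum_const,
      nsmul_eq_mul]
  rw [h4, h3]

lemma sum_chi_val (n : ℕ) (t : Fin n → ZMod 2) :
    ∑ c, chi (t c) = (n : ℝ) - 2 * ((Finset.univ.filter (fun c => t c = 1)).card : ℝ) := by
  classical
  have h1 : ∀ a : ZMod 2, chi a = if a = 1 then -1 else 1 := by
    intro a; rcases (by decide : ∀ x : ZMod 2, x = 0 ∨ x = 1) a with rfl | rfl <;> norm_num [chi, show (1:ZMod 2) ≠ 0 by decide, show (0:ZMod 2) ≠ 1 by decide]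
  have hcard := Finset.card_filter_add_card_filter_not
    (s := (Finset.univ : Finset (Fin n))) (p := fun c => t c = 1)
  simp only [Finset.card_univ, Fintype.card_fin] at hcard
  rw [← Finset.sum_filter_add_sum_filter_not Finset.univ (fun c => t c = 1)]
  simp only [h1]
  rw [Finset.sum_congr rfl (fun c hc => if_pos (Finset.mem_filter.mp hc).2),
      Finset.sum_congr rfl (fun c hc => if_neg (Finset.mem_filter.mp hc).2),
      Finset.sum_const, Finset.sum_const]
  have : ((Finset.univ.filter (fun c => ¬ t c = 1)).card : ℝ)
      = (n : ℝ) - ((Finset.univ.filter (fun c => t c = 1)).card : ℝ) := by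
    have := congrArg (fun x : ℕ => (x : ℝ)) hcard
    push_cast at this
    linarith
  simp only [nsmul_eq_mul, this]
  ring

lemma summable_p (p : ℕ → ℝ) (hpsum : ∑' k, p k = 1) : Summable p := by
  by_contra h
  rw [tsum_eq_zero_of_not_summable h] at hpsum
  norm_num at hpsum

open Classical in
lemma summable_row (n : ℕ) (hn : 1 ≤ n) (p : ℕ → ℝ) (hpnn : ∀ k, 0 ≤ p k)
    (hp : Summable p) (x : Fin n → ZMod 2) :
    Summable (fun k => p k *
      ((Finset.univ.filter (fun f : Fin k → Fin n =>
        ∀ j, (x j = 1 ↔ Odd ((Finset.univ.filter (fun i => f i = j)).card)))).card : ℝ) /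
      (n : ℝ) ^ k) := by
  apply Summable.of_nonneg_of_le _ _ hp
  · intro k
    exact div_nonneg (mul_nonneg (hpnn k) (Nat.cast_nonneg _)) (by positivity)
  · intro k
    have hc : ((Finset.univ.filter (fun f : Fin k → Fin n =>
        ∀ j, (x j = 1 ↔ Odd ((Finset.univ.filter (fun i => f i = j)).card)))).card : ℝ)
        ≤ (n : ℝ) ^ k := by
      have := Finset.card_filter_le (Finset.univ : Finset (Fin k → Fin n))
        (fun f => ∀ j, (x j = 1 ↔ Odd ((Finset.univ.filter (fun i => f i = j)).card)))
      rw [Finset.card_univ, Fintype.card_fun, Fintype.card_fin, Fintype.card_fin] at this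
      exact_mod_cast this
    rw [div_le_iff₀ (by positivity)]
    calc p k * _ ≤ p k * (n:ℝ)^k := by
          apply mul_le_mul_of_nonneg_left hc (hpnn k)
      _ = p k * (n:ℝ)^k := rfl

open Classical in
lemma row_charsum (n : ℕ) (hn : 1 ≤ n) (p : ℕ → ℝ) (hpnn : ∀ k, 0 ≤ p k)
    (hpsum : ∑' k, p k = 1) (t : Fin n → ZMod 2) :
    ∑ x : Fin n → ZMod 2, chi (∑ j, t j * x j) * binRow p n x
      = rho p (1 - 2 * ((Finset.univ.filter (fun c => t c = 1)).card : ℝ) / n) := by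
  have hp := summable_p p hpsum
  have hn0 : (n : ℝ) ≠ 0 := by positivity
  set w : ℝ := ((Finset.univ.filter (fun c => t c = 1)).card : ℝ) with hw
  unfold binRow
  have hstep : ∀ x : Fin n → ZMod 2,
      chi (∑ j, t j * x j) * (∑' k, p k *
        ((Finset.univ.filter (fun f : Fin k → Fin n =>
          ∀ j, (x j = 1 ↔ Odd ((Finset.univ.filter (fun i => f i = j)).card)))).card : ℝ) /
        (n : ℝ) ^ k)
      = ∑' k, chi (∑ j, t j * x j) * (p k *
        ((Finset.univ.filter (fun f : Fin k → Fin n =>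
          ∀ j, (x j = 1 ↔ Odd ((Finset.univ.filter (fun i => f i = j)).card)))).card : ℝ) /
        (n : ℝ) ^ k) := by
    intro x
    exact (tsum_mul_left).symm
  rw [Finset.sum_congr rfl (fun x _ => hstep x)]
  rw [← Summable.tsum_finsetSum (fun x _ => Summable.mul_left _ (summable_row n hn p hpnn hp x))]
  unfold rho
  congr 1; funext k
  have hcs := charsum_k n k t
  rw [sum_chi_val] at hcs
  have : ∑ x : Fin n → ZMod 2, chi (∑ j, t j * x j) * (p k *
        ((Finset.univ.filter (fun f : Fin k → Fin n =>
          ∀ j, (x j = 1 ↔ Odd ((Finset.univ.filter (fun i => f i = j)).card)))).card : ℝ) /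
        (n : ℝ) ^ k)
      = (p k / (n:ℝ)^k) * ∑ x : Fin n → ZMod 2,
        ((Finset.univ.filter (fun f : Fin k → Fin n =>
          ∀ j, (x j = 1 ↔ Odd ((Finset.univ.filter (fun i => f i = j)).card)))).card : ℝ)
          * chi (∑ j, t j * x j) := by
    rw [Finset.mul_sum]
    congr 1; funext x
    ring
  rw [this, hcs]
  rw [show (1 : ℝ) - 2 * w / n = ((n:ℝ) - 2 * w) / n by field_simp]
  rw [div_pow]
  field_simp
  rw [hw]


lemma indicator_eq (n : ℕ) (v : Fin n → ZMod 2) :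
    (if ∀ j, v j = 0 then (1:ℝ) else 0)
      = (2:ℝ)⁻¹ ^ n * ∑ t : Fin n → ZMod 2, chi (∑ j, t j * v j) := by
  classical
  have h1 : ∀ t : Fin n → ZMod 2, chi (∑ j, t j * v j) = ∏ j, chi (t j * v j) := by
    intro t; rw [chi_sum]
  simp only [h1]
  rw [← Fintype.piFinset_univ, ← Finset.prod_univ_sum (fun _ => Finset.univ)
    (fun j a => chi (a * v j))]
  have h2 : ∀ j : Fin n, ∑ a : ZMod 2, chi (a * v j) = 1 + chi (v j) := by
    intro j
    rw [zmod_sum_chi (fun a => chi (a * v j))]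
    rw [zero_mul, one_mul, chi_zero]
  rw [Finset.prod_congr rfl (fun j _ => h2 j)]
  by_cases h : ∀ j, v j = 0
  · rw [if_pos h]
    rw [Finset.prod_congr rfl (fun j _ => by rw [h j, chi_zero])]
    rw [Finset.prod_const, Finset.card_univ, Fintype.card_fin]
    rw [← mul_pow]
    norm_num
  · rw [if_neg h]
    push_neg at h
    obtain ⟨j, hj⟩ := h
    rw [Finset.prod_eq_zero (Finset.mem_univ j) (by rw [chi, if_neg hj]; norm_num)]
    ring

lemma card_weight (n j : ℕ) :
    (Finset.univ.filter (fun t : Fin n → ZMod 2 =>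
      (Finset.univ.filter (fun c => t c = 1)).card = j)).card = n.choose j := by
  classical
  have hz : ∀ a : ZMod 2, a = 0 ∨ a = 1 := by decide
  rw [show n.choose j = (Finset.powersetCard j (Finset.univ : Finset (Fin n))).card by
    rw [Finset.card_powersetCard, Finset.card_univ, Fintype.card_fin]]
  refine Finset.card_bij' (fun t _ => Finset.univ.filter (fun c => t c = 1))
    (fun s _ => fun c => if c ∈ s then (1 : ZMod 2) else 0) ?_ ?_ ?_ ?_
  · intro t ht
    rw [Finset.mem_powersetCard]
    exact ⟨Finset.filter_subset _ _, (Finset.mem_filter.mp ht).2⟩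
  · intro s hs
    rw [Finset.mem_powersetCard] at hs
    rw [Finset.mem_filter]
    refine ⟨Finset.mem_univ _, ?_⟩
    rw [show Finset.univ.filter (fun c => (if c ∈ s then (1 : ZMod 2) else 0) = 1) = s by
      ext c
      simp only [Finset.mem_filter, Finset.mem_univ, true_and]
      by_cases hc : c ∈ s
      · simp [hc]
      · simp [hc]]
    exact hs.2
  · intro t ht
    funext c
    by_cases hc : t c = 1
    · simp [hc]
    · have : t c = 0 := (hz (t c)).resolve_right hc
      simp [hc, this]
  · intro s hs
    ext c
    simp only [Finset.mem_filter, Finset.mem_univ, true_and]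
    by_cases hc : c ∈ s
    · simp [hc]
    · simp [hc]

theorem stmt11 (n : ℕ) (hn : 1 ≤ n) (m : ℕ)
    (p : ℕ → ℝ) (hpnn : ∀ k, 0 ≤ p k) (hp0 : p 0 = 0) (hpsum : ∑' k, p k = 1) :
    probAbin p n m =
      (2 : ℝ)⁻¹ ^ n * ∑ j ∈ Finset.range (n + 1),
        (n.choose j : ℝ) * (rho p (1 - 2 * (j : ℝ) / n)) ^ m := by
  classical
  unfold probAbin
  have hstep1 : ∀ M : Fin m → Fin n → ZMod 2,
      (if ∀ j, (∑ i, M i j) = 0 then ∏ i, binRow p n (M i) else 0)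
      = (2:ℝ)⁻¹ ^ n * ∑ t : Fin n → ZMod 2,
          ∏ i, (chi (∑ j, t j * M i j) * binRow p n (M i)) := by
    intro M
    have h1 : (if ∀ j, (∑ i, M i j) = 0 then (1:ℝ) else 0) * ∏ i, binRow p n (M i)
        = (if ∀ j, (∑ i, M i j) = 0 then ∏ i, binRow p n (M i) else 0) := by
      split <;> simp
    rw [← h1, indicator_eq n (fun j => ∑ i, M i j), mul_assoc, Finset.sum_mul]
    congr 1
    apply Finset.sum_congr rfl
    intro t _
    have h2 : (∑ j, t j * ∑ i, M i j) = ∑ i : Fin m, ∑ j, t j * M i j := by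
      simp only [Finset.mul_sum]
      exact Finset.sum_comm
    rw [h2, chi_sum, ← Finset.prod_mul_distrib]
  rw [Finset.sum_congr rfl (fun M _ => hstep1 M), ← Finset.mul_sum]
  congr 1
  rw [Finset.sum_comm]
  have hinner : ∀ t : Fin n → ZMod 2,
      ∑ M : Fin m → Fin n → ZMod 2, ∏ i, (chi (∑ j, t j * M i j) * binRow p n (M i))
      = (rho p (1 - 2 * (((Finset.univ.filter (fun c => t c = 1)).card : ℝ)) / n)) ^ m := by
    intro t
    rw [← Fintype.piFinset_univ, ← Finset.prod_univ_sum (fun _ : Fin m => Finset.univ)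
      (fun _ x => chi (∑ j, t j * x j) * binRow p n x)]
    rw [Finset.prod_congr rfl (fun i _ => row_charsum n hn p hpnn hpsum t)]
    rw [Finset.prod_const, Finset.card_univ, Fintype.card_fin]
  rw [Finset.sum_congr rfl (fun t _ => hinner t)]
  rw [← Finset.sum_fiberwise_of_maps_to (t := Finset.range (n+1))
    (g := fun t : Fin n → ZMod 2 => (Finset.univ.filter (fun c => t c = 1)).card)
    (fun t _ => by
      rw [Finset.mem_range, Nat.lt_succ_iff]
      calc (Finset.univ.filter (fun c => t c = 1)).card
          ≤ (Finset.univ : Finset (Fin n)).card := Finset.card_filter_le _ _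
        _ = n := by rw [Finset.card_univ, Fintype.card_fin])
    (fun t => (rho p (1 - 2 * (((Finset.univ.filter (fun c => t c = 1)).card : ℝ)) / n)) ^ m)]
  apply Finset.sum_congr rfl
  intro j hj
  rw [Finset.sum_congr rfl (fun t ht => by
    rw [show (Finset.univ.filter (fun c => t c = 1)).card = j from
      (Finset.mem_filter.mp ht).2])]
  rw [Finset.sum_const, card_weight, nsmul_eq_mul]
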